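/- Let I be a Hausdorff topological space, P ⊆ I a closed subset, and Φ : I → I a homeomorphism with Φ(P) = P. Let η : [0,∞) → [0,∞) be a homeomorphism with η(t) < t for every t > 0. Let X := (I × [0,∞)) ∖ (P × {0}) with the subspace topology, let γ : X → X be the homeomorphism γ(x,t) = (Φ(x), η(t)), and let F : X → ℝ be a continuous proper map (preimages of compact sets are compact) satisfying F(γ(z)) = F(z) + 1 for all z ∈ X. Then for every x ∈ I, F(x,t) tends to −∞ as t tends to +∞. -/

import Mathlib

open Set Filter
open scoped NNReal

private lemma homeo_tendsto_atTop (e : ℝ≥0 ≃ₜ ℝ≥0) :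
    Filter.Tendsto e Filter.atTop Filter.atTop := by
  rw [tendsto_atTop]
  intro b
  have hK : IsCompact (e ⁻¹' Set.Iic b) := e.isCompact_preimage.mpr (by rw [← Set.Icc_bot]; exact isCompact_Icc)
  obtain ⟨c, hc⟩ := hK.bddAbove
  filter_upwards [eventually_gt_atTop c] with t ht
  by_contra h
  push_neg at h
  exact absurd (hc (Set.mem_preimage.mpr (Set.mem_Iic.mpr h.le))) (not_le.mpr ht)

private lemma homeo_iterate_tendsto_atTop (e : ℝ≥0 ≃ₜ ℝ≥0) (N : ℕ) :
    Filter.Tendsto (⇑e)^[N] Filter.atTop Filter.atTop := by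
  induction N with
  | zero => simpa using tendsto_id
  | succ n ih =>
    rw [Function.iterate_succ]
    exact ih.comp (homeo_tendsto_atTop e)

/-- with X = (I × [0,∞)) ∖ (P × {0}), γ(x,t) = (Φ(x), η(t)), and F a
continuous proper real function on X with F ∘ γ = F + 1, one has F(x,t) → −∞ as
t → +∞, for every x ∈ I. Here [0,∞) is modelled by ℝ≥0. -/
theorem stmt11 {I : Type*} [TopologicalSpace I] [T2Space I]
    (P : Set I) (hP : IsClosed P)
    (Φ : I ≃ₜ I) (hΦP : Φ '' P = P)
    (η : ℝ≥0 ≃ₜ ℝ≥0) (hη : ∀ t : ℝ≥0, 0 < t → η t < t)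
    (Xs : Set (I × ℝ≥0)) (hXs : Xs = {z : I × ℝ≥0 | ¬(z.1 ∈ P ∧ z.2 = 0)})
    (F : I × ℝ≥0 → ℝ)
    (hFc : ContinuousOn F Xs)
    (hFprop : ∀ K : Set ℝ, IsCompact K → IsCompact (Xs ∩ F ⁻¹' K))
    (hFeq : ∀ z ∈ Xs, F (Φ z.1, η z.2) = F z + 1) :
    ∀ x : I, Filter.Tendsto (fun t : ℝ≥0 => F (x, t)) Filter.atTop Filter.atBot := by
  -- basic facts about η
  have hη0 : η 0 = 0 := by
    have h1 : Filter.Tendsto η (nhdsWithin 0 (Set.Ioi 0)) (nhds (η 0)) :=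
      (η.continuous.tendsto 0).mono_left nhdsWithin_le_nhds
    have h2 : Filter.Tendsto (fun s : ℝ≥0 => s) (nhdsWithin 0 (Set.Ioi 0)) (nhds 0) :=
      tendsto_id.mono_left nhdsWithin_le_nhds
    have hle : η 0 ≤ 0 := by
      refine le_of_tendsto_of_tendsto h1 h2 ?_
      filter_upwards [self_mem_nhdsWithin] with s hs
      exact (hη s hs).le
    exact le_antisymm hle (zero_le (a := η 0))
  have hηle : ∀ s : ℝ≥0, η s ≤ s := by
    intro s
    rcases eq_or_lt_of_le (zero_le (a := s)) with h | h
    · rw [← h, hη0]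
    · exact (hη s h).le
  have hηpos : ∀ s : ℝ≥0, 0 < s → 0 < η s := by
    intro s hs
    rcases eq_or_lt_of_le (zero_le (a := η s)) with h | h
    · exact absurd (η.injective (h.symm.trans hη0.symm)) hs.ne'
    · exact h
  have hsymmge : ∀ s : ℝ≥0, s ≤ η.symm s := by
    intro s
    have := hηle (η.symm s)
    rwa [Homeomorph.apply_symm_apply] at this
  intro x
  rw [tendsto_atBot]
  intro M
  obtain ⟨N, hN⟩ := exists_nat_ge (1 - M)
  have hKc : IsCompact (Xs ∩ F ⁻¹' Set.Icc (0:ℝ) 1) := hFprop _ isCompact_Icc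
  obtain ⟨b, hb⟩ := (hKc.image continuous_snd).bddAbove
  have hb' : ∀ z ∈ Xs ∩ F ⁻¹' Set.Icc (0:ℝ) 1, z.2 ≤ b := fun z hz => hb ⟨z, hz, rfl⟩
  have htend := (homeo_iterate_tendsto_atTop η N).eventually (eventually_gt_atTop b)
  filter_upwards [htend, eventually_ge_atTop 1] with t hbt ht1
  by_contra hFM
  push_neg at hFM
  have ht0 : (0:ℝ≥0) < t := lt_of_lt_of_le one_pos ht1
  -- positivity of forward iterates
  have hitpos : ∀ k : ℕ, 0 < (⇑η)^[k] t := by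
    intro k
    induction k with
    | zero => simpa using ht0
    | succ n ih => rw [Function.iterate_succ_apply']; exact hηpos _ ih
  -- antitonicity of forward iterates
  have hitanti : Antitone fun k : ℕ => (⇑η)^[k] t := by
    apply antitone_nat_of_succ_le
    intro k
    rw [Function.iterate_succ_apply']
    exact hηle _
  -- backward iterates grow and stay positive
  have hbwdge : ∀ k : ℕ, t ≤ (⇑η.symm)^[k] t := by
    intro k
    induction k with
    | zero => simp
    | succ n ih =>
      rw [Function.iterate_succ_apply']
      exact ih.trans (hsymmge _)
  -- forward points
  have hfwdXs : ∀ k : ℕ, ((⇑Φ)^[k] x, (⇑η)^[k] t) ∈ Xs := by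
    intro k
    rw [hXs]
    exact fun h => (hitpos k).ne' h.2
  have hbwdXs : ∀ k : ℕ, ((⇑Φ.symm)^[k] x, (⇑η.symm)^[k] t) ∈ Xs := by
    intro k
    rw [hXs]
    exact fun h => (lt_of_lt_of_le ht0 (hbwdge k)).ne' h.2
  have hFfwd : ∀ k : ℕ, F ((⇑Φ)^[k] x, (⇑η)^[k] t) = F (x, t) + k := by
    intro k
    induction k with
    | zero => simp
    | succ n ih =>
      rw [Function.iterate_succ_apply', Function.iterate_succ_apply']
      have := hFeq _ (hfwdXs n)
      simp only at this
      rw [this, ih]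
      push_cast
      ring
  have hFbwd : ∀ k : ℕ, F ((⇑Φ.symm)^[k] x, (⇑η.symm)^[k] t) = F (x, t) - k := by
    intro k
    induction k with
    | zero => simp
    | succ n ih =>
      have h := hFeq _ (hbwdXs (n + 1))
      simp only at h
      rw [Function.iterate_succ_apply', Function.iterate_succ_apply',
        Homeomorph.apply_symm_apply, Homeomorph.apply_symm_apply] at h
      have : F ((⇑Φ.symm)^[n+1] x, (⇑η.symm)^[n+1] t) = F ((⇑Φ.symm)^[n] x, (⇑η.symm)^[n] t) - 1 := by
        rw [Function.iterate_succ_apply', Function.iterate_succ_apply']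
        linarith [h]
      rw [this, ih]
      push_cast
      ring
  set v := F (x, t) with hv
  set n : ℤ := ⌈-v⌉ with hn
  have h1 : 0 ≤ v + n := by
    have := Int.le_ceil (-v)
    push_cast at this ⊢
    linarith
  have h2 : v + n < 1 := by
    have := Int.ceil_lt_add_one (-v)
    push_cast at this ⊢
    linarith
  rcases le_or_gt 0 n with hn0 | hn0
  · -- forward case
    set k := n.toNat with hk
    have hkn : (k : ℝ) = (n : ℝ) := by
      exact_mod_cast Int.toNat_of_nonneg hn0
    have hmemK : ((⇑Φ)^[k] x, (⇑η)^[k] t) ∈ Xs ∩ F ⁻¹' Set.Icc (0:ℝ) 1 := by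
      refine ⟨hfwdXs k, ?_⟩
      simp only [Set.mem_preimage, Set.mem_Icc, hFfwd k, hkn]
      exact ⟨h1, h2.le⟩
    have hle : (⇑η)^[k] t ≤ b := hb' _ hmemK
    have hkN : k ≤ N := by
      have : (k : ℝ) < (N : ℝ) := by
        rw [hkn]
        have : (n : ℝ) < 1 - v := by linarith
        have hvM : M < v := hFM
        linarith
      exact_mod_cast this.le
    exact absurd (le_trans (hitanti hkN) hle) (not_le.mpr hbt)
  · -- backward case
    set m := (-n).toNat with hm
    have hmn : (m : ℝ) = -(n : ℝ) := by
      have h3 : ((-n).toNat : ℤ) = -n := Int.toNat_of_nonneg (by omega)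
      exact_mod_cast h3
    have hmemK : ((⇑Φ.symm)^[m] x, (⇑η.symm)^[m] t) ∈ Xs ∩ F ⁻¹' Set.Icc (0:ℝ) 1 := by
      refine ⟨hbwdXs m, ?_⟩
      simp only [Set.mem_preimage, Set.mem_Icc, hFbwd m, hmn]
      constructor <;> linarith
    have hle : (⇑η.symm)^[m] t ≤ b := hb' _ hmemK
    have htb : b < t := lt_of_lt_of_le hbt (hitanti (Nat.zero_le N) |>.trans_eq (by simp))
    exact absurd (le_trans (hbwdge m) hle) (not_le.mpr htb)
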